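/- Let G be a strongly topologically orderable gyrogroup. Then either G is metrizable, or G has a totally ordered local base ℋ at the identity consisting of clopen L-subgyrogroups H such that gyr[x,y](H) = H for all x, y ∈ G and H ∈ ℋ. -/
import Mathlib


open Set Topology

universe u

class Gyrogroup (G : Type u) where
  op : G → G → G
  one : G
  inv : G → G
  gyr : G → G → G ≃ G
  one_op : ∀ g, op one g = g
  op_one : ∀ g, op g one = g
  inv_op : ∀ g, op (inv g) g = one
  op_inv : ∀ g, op g (inv g) = one
  unique_one : ∀ e : G, (∀ g, op e g = g ∧ op g e = g) → e = one
  unique_inv : ∀ g h : G, (op h g = one ∧ op g h = one) → h = inv g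
  gyr_op : ∀ g h f, op g (op h f) = op (op g h) (gyr g h f)
  gyr_hom : ∀ g h a b, gyr g h (op a b) = op (gyr g h a) (gyr g h b)
  loop : ∀ g h, gyr g h = gyr (op g h) h

namespace Gyrogroup

variable {G : Type u} [Gyrogroup G]

/-- `H` is a subgyrogroup: nonempty and a gyrogroup under the restricted operations. -/
def IsSubgyrogroup (H : Set G) : Prop :=
  H.Nonempty ∧ one ∈ H ∧
  (∀ a ∈ H, ∀ b ∈ H, op a b ∈ H) ∧
  (∀ a ∈ H, inv a ∈ H) ∧
  (∀ a ∈ H, ∀ b ∈ H, Set.BijOn (gyr a b) H H)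

/-- `H` is an L-subgyrogroup: `gyr g h` fixes `H` setwise for every `g ∈ G`, `h ∈ H`. -/
def IsLSubgyrogroup (H : Set G) : Prop :=
  IsSubgyrogroup H ∧ ∀ g : G, ∀ h ∈ H, (gyr g h) '' H = H

def leftCoset (a : G) (H : Set G) : Set G := (fun h => op a h) '' H

/-- The subgyrogroup generated by `S`. -/
def generatedSubgyrogroup (S : Set G) : Set G :=
  ⋂₀ {H : Set G | IsSubgyrogroup H ∧ S ⊆ H}

/-- The gyrogroup operations are continuous (topological gyrogroup). -/
def ContinuousGyroOps (G : Type u) [Gyrogroup G] [TopologicalSpace G] : Prop :=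
  Continuous (fun p : G × G => op p.1 p.2) ∧ Continuous (inv : G → G)

/-- The topology coincides with the order topology of some linear order. -/
def TopologicallyOrderable (G : Type u) [t : TopologicalSpace G] : Prop :=
  ∃ l : LinearOrder G, t = TopologicalSpace.generateFrom
      {s : Set G | ∃ a : G, s = {x | l.lt a x} ∨ s = {x | l.lt x a}}

/-- A strongly topological gyrogroup: a topological gyrogroup with a neighborhood base
at `1` whose members are invariant under all gyroautomorphisms. -/
def StronglyTopologicalGyrogroup (G : Type u) [Gyrogroup G] [TopologicalSpace G] : Prop :=
  ContinuousGyroOps G ∧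
  ∃ 𝒰 : Set (Set G), (∀ U ∈ 𝒰, U ∈ nhds (one : G)) ∧
    (∀ V ∈ nhds (one : G), ∃ U ∈ 𝒰, U ⊆ V) ∧
    (∀ U ∈ 𝒰, ∀ x y : G, (gyr x y) '' U = U)

def StronglyTopologicallyOrderable (G : Type u) [Gyrogroup G] [TopologicalSpace G] : Prop :=
  StronglyTopologicalGyrogroup G ∧ TopologicallyOrderable G

lemma op_left_injective (a : G) : Function.Injective (op a) := by
  intro x y e
  have hx : op (inv a) (op a x) = gyr (inv a) a x := by
    rw [gyr_op, inv_op, one_op]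
  have hy : op (inv a) (op a y) = gyr (inv a) a y := by
    rw [gyr_op, inv_op, one_op]
  have : gyr (inv a) a x = gyr (inv a) a y := by rw [← hx, ← hy, e]
  exact (gyr (inv a) a).injective this

lemma gyr_one_left (a : G) (c : G) : gyr one a c = c := by
  have h := gyr_op (one : G) a c
  rw [one_op, one_op] at h
  exact (op_left_injective a h.symm)

lemma gyr_inv_self (a : G) (c : G) : gyr (inv a) a c = c := by
  have h : gyr (inv a) a = gyr (op (inv a) a) a := loop (inv a) a
  rw [inv_op] at h
  rw [h, gyr_one_left]

lemma left_cancel (a b : G) : op (inv a) (op a b) = b := by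
  rw [gyr_op, inv_op, one_op, gyr_inv_self]

lemma eq_inv_of_op_eq_one {g h : G} (e : op g h = one) : h = inv g := by
  have := left_cancel g h
  rw [e, op_one] at this
  exact this.symm

lemma inv_one : inv (one : G) = one :=
  (eq_inv_of_op_eq_one (one_op one)).symm

lemma gyr_self_inv (a : G) (c : G) : gyr a (inv a) c = c := by
  have h : gyr a (inv a) = gyr (op a (inv a)) (inv a) := loop a (inv a)
  rw [op_inv] at h
  rw [h, gyr_one_left]

lemma left_cancel' (a b : G) : op a (op (inv a) b) = b := by
  rw [gyr_op, op_inv, one_op, gyr_self_inv]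

lemma inv_inv (a : G) : inv (inv a) = a :=
  (eq_inv_of_op_eq_one (inv_op a)).symm

lemma gyr_one_right (x y : G) : gyr x y one = one := by
  have h := gyr_hom x y one one
  rw [one_op] at h
  have h2 := left_cancel (gyr x y one) (gyr x y one)
  rw [← h, inv_op] at h2
  exact h2.symm

lemma gyr_inv (x y a : G) : gyr x y (inv a) = inv (gyr x y a) := by
  apply eq_inv_of_op_eq_one
  rw [← gyr_hom, op_inv, gyr_one_right]

lemma inv_op_rev (a b : G) : gyr a b (op (inv b) (inv a)) = inv (op a b) := by
  apply eq_inv_of_op_eq_one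
  rw [← gyr_op]
  rw [left_cancel' b (inv a), op_inv]

lemma coset_identity (x k : G) : op (op x k) (gyr x k (inv k)) = x := by
  rw [← gyr_op, op_inv, op_one]

lemma comp_identity (x y z : G) :
    op (op (inv x) y) (gyr (inv x) y (op (inv y) z)) = op (inv x) z := by
  rw [← gyr_op, left_cancel' y z]

/-- `inv (op (inv x) y) = gyr (inv x) y (op (inv y) x)` -/
lemma symm_identity (x y : G) :
    gyr (inv x) y (op (inv y) x) = inv (op (inv x) y) := by
  have := inv_op_rev (inv x) y
  rw [inv_inv] at this
  exact this

end Gyrogroup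

set_option linter.unusedSectionVars false

section Topo

open Gyrogroup

variable {G : Type u} [Gyrogroup G] [TopologicalSpace G]

/-- Left translation as a homeomorphism. -/
def homeoL (hc : Continuous fun p : G × G => op p.1 p.2) (a : G) : G ≃ₜ G where
  toFun := op a
  invFun := op (inv a)
  left_inv := left_cancel a
  right_inv := left_cancel' a
  continuous_toFun := hc.comp (continuous_const.prodMk continuous_id)
  continuous_invFun := hc.comp (continuous_const.prodMk continuous_id)

lemma image_op_mem_nhds (hc : Continuous fun p : G × G => op p.1 p.2) (a : G)
    {V : Set G} (hV : V ∈ 𝓝 (one : G)) : op a '' V ∈ 𝓝 a := by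
  have h := (homeoL hc a).map_nhds_eq (one : G)
  have ha : (homeoL hc a) (one : G) = a := op_one a
  rw [ha] at h
  rw [← h]
  exact Filter.image_mem_map hV

lemma image_inv_eq_preimage (S : Set G) : (inv : G → G) '' S = (inv : G → G) ⁻¹' S := by
  ext z
  constructor
  · rintro ⟨w, hw, rfl⟩
    simpa [Gyrogroup.inv_inv] using hw
  · intro hz
    exact ⟨inv z, hz, inv_inv z⟩

lemma gyr_image_preimage_inv (x y : G) (S : Set G) :
    (gyr x y) '' ((inv : G → G) ⁻¹' S) = (inv : G → G) ⁻¹' ((gyr x y) '' S) := by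
  ext z
  constructor
  · rintro ⟨w, hw, rfl⟩
    exact ⟨inv w, hw, gyr_inv x y w⟩
  · rintro ⟨s, hs, hsz⟩
    refine ⟨inv s, by simpa [Gyrogroup.inv_inv] using hs, ?_⟩
    rw [Gyrogroup.gyr_inv, hsz, Gyrogroup.inv_inv]

/-- A "good" set: a neighborhood of `one` that is symmetric and gyr-invariant. -/
def GoodSet (V : Set G) : Prop :=
  V ∈ 𝓝 (one : G) ∧ (∀ x ∈ V, inv x ∈ V) ∧ ∀ x y : G, (gyr x y) '' V = V

lemma mem_of_gyr_mem {V : Set G} (hV : ∀ x y : G, (gyr x y) '' V = V) {x y a : G}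
    (h : gyr x y a ∈ V) : a ∈ V := by
  have := (hV x y).symm ▸ h
  obtain ⟨c, hc, hca⟩ := this
  rwa [← (gyr x y).injective hca]

lemma shrink (hS : StronglyTopologicalGyrogroup G) {U : Set G} (hU : U ∈ 𝓝 (one : G)) :
    ∃ V : Set G, GoodSet V ∧ V ⊆ U ∧ ∀ a ∈ V, ∀ b ∈ V, op a b ∈ U := by
  obtain ⟨⟨hc, hi⟩, 𝒰, hU1, hU2, hU3⟩ := hS
  have hop1 : Filter.Tendsto (fun p : G × G => op p.1 p.2) (𝓝 ((one : G), (one : G)))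
      (𝓝 (one : G)) := by
    have := hc.tendsto ((one : G), (one : G))
    simpa [one_op] using this
  have hpre : (fun p : G × G => op p.1 p.2) ⁻¹' U ∈ 𝓝 ((one : G), (one : G)) := hop1 hU
  rw [nhds_prod_eq, Filter.mem_prod_iff] at hpre
  obtain ⟨A, hA, B, hB, hAB⟩ := hpre
  obtain ⟨U₁, hU₁mem, hU₁sub⟩ := hU2 (A ∩ B ∩ U) (Filter.inter_mem (Filter.inter_mem hA hB) hU)
  have hU₁nhds : U₁ ∈ 𝓝 (one : G) := hU1 U₁ hU₁mem
  have hU₁inv : U₁ ⊆ A ∩ B ∩ U := hU₁sub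
  refine ⟨U₁ ∩ (inv : G → G) ⁻¹' U₁, ⟨?_, ?_, ?_⟩, ?_, ?_⟩
  · refine Filter.inter_mem hU₁nhds ?_
    have : Filter.Tendsto (inv : G → G) (𝓝 (one : G)) (𝓝 (one : G)) := by
      have := hi.tendsto (one : G)
      simpa [Gyrogroup.inv_one] using this
    exact this hU₁nhds
  · rintro x ⟨hx1, hx2⟩
    exact ⟨hx2, by simpa [Gyrogroup.inv_inv] using hx1⟩
  · intro x y
    rw [Set.image_inter (gyr x y).injective, hU3 U₁ hU₁mem,
      gyr_image_preimage_inv, hU3 U₁ hU₁mem]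
  · intro x hx
    exact (hU₁inv hx.1).2
  · intro a ha b hb
    exact hAB (Set.mk_mem_prod (hU₁inv ha.1).1.1 (hU₁inv hb.1).1.2)

lemma seq_shrink (hS : StronglyTopologicalGyrogroup G) (T : ℕ → Set G)
    (hT : ∀ n, T n ∈ 𝓝 (one : G)) :
    ∃ V : ℕ → Set G, (∀ n, GoodSet (V n)) ∧ (∀ n, V n ⊆ T n) ∧ (∀ n, V (n + 1) ⊆ V n) ∧
      ∀ n, ∀ a ∈ V (n + 1), ∀ b ∈ V (n + 1), op a b ∈ V n := by
  have step := fun (U : Set G) (hU : U ∈ 𝓝 (one : G)) => shrink hS hU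
  choose f hf1 hf2 hf3 using step
  let R : ℕ → {V : Set G // GoodSet V} := fun n =>
    Nat.rec (motive := fun _ => {V : Set G // GoodSet V})
      ⟨f (T 0) (hT 0), hf1 _ _⟩
      (fun n p => ⟨f (p.1 ∩ T (n + 1)) (Filter.inter_mem p.2.1 (hT (n + 1))),
        hf1 _ _⟩) n
  have hRsucc : ∀ n, (R (n + 1)).1 = f ((R n).1 ∩ T (n + 1))
      (Filter.inter_mem (R n).2.1 (hT (n + 1))) := fun n => rfl
  refine ⟨fun n => (R n).1, fun n => (R n).2, ?_, ?_, ?_⟩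
  · intro n
    cases n with
    | zero => exact hf2 _ _
    | succ m => exact (hf2 _ _).trans Set.inter_subset_right
  · intro n
    exact (hf2 _ _).trans Set.inter_subset_left
  · intro n a ha b hb
    exact Set.inter_subset_left (hf3 _ _ a ha b hb)

lemma exists_clopen_sub (hS : StronglyTopologicalGyrogroup G)
    (Pp : ∀ W : ℕ → Set G, (∀ n, W n ∈ 𝓝 (one : G)) → (⋂ n, W n) ∈ 𝓝 (one : G))
    {U : Set G} (hU : U ∈ 𝓝 (one : G)) :
    ∃ K : Set G, K ∈ 𝓝 (one : G) ∧ K ⊆ U ∧ IsClopen K ∧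
      (∀ a ∈ K, ∀ b ∈ K, op a b ∈ K) ∧ (∀ a ∈ K, inv a ∈ K) ∧
      ∀ x y : G, (gyr x y) '' K = K := by
  have hc : Continuous fun p : G × G => op p.1 p.2 := hS.1.1
  obtain ⟨V, hVg, hVsub, hVdec, hVprod⟩ := seq_shrink hS (fun _ => U) (fun _ => hU)
  set K : Set G := ⋂ n, V n with hK
  have hKmem : K ∈ 𝓝 (one : G) := Pp V fun n => (hVg n).1
  have hone : (one : G) ∈ K := mem_of_mem_nhds hKmem
  have hop : ∀ a ∈ K, ∀ b ∈ K, op a b ∈ K := by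
    intro a ha b hb
    refine Set.mem_iInter.2 fun n => ?_
    exact hVprod n a (Set.mem_iInter.1 ha (n + 1)) b (Set.mem_iInter.1 hb (n + 1))
  have hinv : ∀ a ∈ K, inv a ∈ K := by
    intro a ha
    exact Set.mem_iInter.2 fun n => (hVg n).2.1 a (Set.mem_iInter.1 ha n)
  have hgyr : ∀ x y : G, (gyr x y) '' K = K := by
    intro x y
    rw [hK, Set.image_iInter (gyr x y).bijective]
    exact Set.iInter_congr fun n => (hVg n).2.2 x y
  have hopen : IsOpen K := by
    rw [isOpen_iff_mem_nhds]
    intro k hk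
    have h1 : op k '' K ∈ 𝓝 k := image_op_mem_nhds hc k hKmem
    refine Filter.mem_of_superset h1 ?_
    rintro _ ⟨b, hb, rfl⟩
    exact hop k hk b hb
  have hclosed : IsClosed K := by
    rw [← isOpen_compl_iff, isOpen_iff_mem_nhds]
    intro x hx
    have h1 : op x '' K ∈ 𝓝 x := image_op_mem_nhds hc x hKmem
    refine Filter.mem_of_superset h1 ?_
    rintro _ ⟨k₁, hk₁, rfl⟩ hmem
    apply hx
    have h2 : gyr x k₁ (inv k₁) ∈ K := by
      have : inv k₁ ∈ K := hinv k₁ hk₁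
      have himg := hgyr x k₁
      exact himg ▸ ⟨inv k₁, this, rfl⟩
    have := hop _ hmem _ h2
    rwa [coset_identity] at this
  exact ⟨K, hKmem, (Set.iInter_subset V 0).trans (hVsub 0), ⟨hclosed, hopen⟩, hop, hinv, hgyr⟩

lemma subgroup_in_halfspace (hc : Continuous fun p : G × G => op p.1 p.2)
    {S P N : Set G} (hop : ∀ a ∈ S, ∀ b ∈ S, op a b ∈ S) (hinv : ∀ a ∈ S, inv a ∈ S)
    (hSP : S ⊆ P) (hP : P ∉ 𝓝 (one : G)) (hNo : IsOpen N) (hne : N.Nonempty)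
    (hNS : N ⊆ S) : False := by
  obtain ⟨t, ht⟩ := hne
  have himg : op (inv t) '' N ∈ 𝓝 (one : G) := by
    have hopen : IsOpen (op (inv t) '' N) := (homeoL hc (inv t)).isOpen_image.2 hNo
    have hmem : (one : G) ∈ op (inv t) '' N := ⟨t, ht, inv_op t⟩
    exact hopen.mem_nhds hmem
  apply hP
  refine Filter.mem_of_superset himg ?_
  rintro _ ⟨x, hx, rfl⟩
  exact hSP (hop _ (hinv t (hNS ht)) _ (hNS hx))

end Topo

section OrderTopo

lemma exists_convex_open {α : Type*} [TopologicalSpace α] [LinearOrder α] [OrderTopology α]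
    (a : α) {U : Set α} (hU : U ∈ 𝓝 a) :
    ∃ I : Set α, a ∈ I ∧ I ⊆ U ∧ IsOpen I ∧ I.OrdConnected := by
  rw [nhds_eq_order a, Filter.mem_inf_iff] at hU
  obtain ⟨A, hA, B, hB, rfl⟩ := hU
  have left : ∃ I : Set α, a ∈ I ∧ I ⊆ A ∧ IsOpen I ∧ I.OrdConnected := by
    rcases Set.eq_empty_or_nonempty (Set.Iio a) with he | hne
    · rw [he] at hA
      simp only [Set.mem_empty_iff_false, iInf_false, iInf_top, Filter.mem_top] at hA
      exact ⟨Set.univ, trivial, hA.symm.subset.trans (le_refl _), isOpen_univ,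
        Set.ordConnected_univ⟩
    · have hdir : DirectedOn ((fun b => Filter.principal (Set.Ioi b)) ⁻¹'o (· ≥ ·))
          (Set.Iio a) := by
        intro b₁ hb₁ b₂ hb₂
        exact ⟨max b₁ b₂, max_lt hb₁ hb₂,
          Filter.principal_mono.2 (Set.Ioi_subset_Ioi (le_max_left _ _)),
          Filter.principal_mono.2 (Set.Ioi_subset_Ioi (le_max_right _ _))⟩
      rw [Filter.mem_biInf_of_directed hdir hne] at hA
      obtain ⟨b, hb, hbA⟩ := hA
      exact ⟨Set.Ioi b, hb, hbA, isOpen_Ioi, Set.ordConnected_Ioi⟩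
  have right : ∃ I : Set α, a ∈ I ∧ I ⊆ B ∧ IsOpen I ∧ I.OrdConnected := by
    rcases Set.eq_empty_or_nonempty (Set.Ioi a) with he | hne
    · rw [he] at hB
      simp only [Set.mem_empty_iff_false, iInf_false, iInf_top, Filter.mem_top] at hB
      exact ⟨Set.univ, trivial, hB.symm.subset.trans (le_refl _), isOpen_univ,
        Set.ordConnected_univ⟩
    · have hdir : DirectedOn ((fun b => Filter.principal (Set.Iio b)) ⁻¹'o (· ≥ ·))
          (Set.Ioi a) := by
        intro b₁ hb₁ b₂ hb₂
        exact ⟨min b₁ b₂, lt_min hb₁ hb₂,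
          Filter.principal_mono.2 (Set.Iio_subset_Iio (min_le_left _ _)),
          Filter.principal_mono.2 (Set.Iio_subset_Iio (min_le_right _ _))⟩
      rw [Filter.mem_biInf_of_directed hdir hne] at hB
      obtain ⟨b, hb, hbB⟩ := hB
      exact ⟨Set.Iio b, hb, hbB, isOpen_Iio, Set.ordConnected_Iio⟩
  obtain ⟨I₁, hI₁a, hI₁A, hI₁o, hI₁c⟩ := left
  obtain ⟨I₂, hI₂a, hI₂B, hI₂o, hI₂c⟩ := right
  exact ⟨I₁ ∩ I₂, ⟨hI₁a, hI₂a⟩, Set.inter_subset_inter hI₁A hI₂B, hI₁o.inter hI₂o,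
    hI₁c.inter hI₂c⟩

/-- Union of two order-connected sets with a common point is order-connected. -/
lemma ordConnected_union_of_common {α : Type*} [LinearOrder α] {I J : Set α} {p : α}
    (hI : I.OrdConnected) (hJ : J.OrdConnected) (hpI : p ∈ I) (hpJ : p ∈ J) :
    (I ∪ J).OrdConnected := by
  constructor
  intro x hx y hy z hz
  rcases le_total z p with hzp | hpz
  · rcases hx with hxI | hxJ
    · exact Or.inl (hI.out hxI hpI ⟨hz.1, hzp⟩)
    · exact Or.inr (hJ.out hxJ hpJ ⟨hz.1, hzp⟩)
  · rcases hy with hyI | hyJ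
    · exact Or.inl (hI.out hpI hyI ⟨hpz, hz.2⟩)
    · exact Or.inr (hJ.out hpJ hyJ ⟨hpz, hz.2⟩)

end OrderTopo

section PPoint

open Gyrogroup

variable {G : Type u} [Gyrogroup G] [TopologicalSpace G] [LinearOrder G] [OrderTopology G]

lemma nhds_lt_of_not_Ici (hcL : Set.Ici (one : G) ∉ 𝓝 (one : G)) {W : Set G}
    (hW : W ∈ 𝓝 (one : G)) : ∃ x ∈ W, x < one := by
  by_contra hcon
  push_neg at hcon
  exact hcL (Filter.mem_of_superset hW fun x hx => hcon x hx)

lemma nhds_gt_of_not_Iic (hcR : Set.Iic (one : G) ∉ 𝓝 (one : G)) {W : Set G}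
    (hW : W ∈ 𝓝 (one : G)) : ∃ x ∈ W, one < x := by
  by_contra hcon
  push_neg at hcon
  exact hcR (Filter.mem_of_superset hW fun x hx => hcon x hx)

lemma cg_of_base {ι : Type} [Countable ι] [Nonempty ι] (B : ι → Set G)
    (hmem : ∀ i, B i ∈ 𝓝 (one : G)) (hbase : ∀ W ∈ 𝓝 (one : G), ∃ i, B i ⊆ W) :
    (𝓝 (one : G)).IsCountablyGenerated := by
  have hb : (𝓝 (one : G)).HasBasis (fun _ : ι => True) B :=
    ⟨fun t => ⟨fun ht => (hbase t ht).imp fun i hi => ⟨trivial, hi⟩,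
      fun ⟨i, _, hi⟩ => Filter.mem_of_superset (hmem i) hi⟩⟩
  exact hb.isCountablyGenerated

lemma ppoint (hS : StronglyTopologicalGyrogroup G) (U : ℕ → Set G)
    (hU : ∀ n, U n ∈ 𝓝 (one : G)) :
    (𝓝 (one : G)).IsCountablyGenerated ∨ (⋂ n, U n) ∈ 𝓝 (one : G) := by
  by_cases hT : (⋂ n, U n) ∈ 𝓝 (one : G)
  · exact Or.inr hT
  left
  have step := fun (W : Set G) (hW : W ∈ 𝓝 (one : G)) => exists_convex_open (one : G) hW
  choose f hf1 hf2 hf3 hf4 using step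
  let R : ℕ → {I : Set G // one ∈ I ∧ IsOpen I ∧ I.OrdConnected} := fun n =>
    Nat.rec (motive := fun _ => {I : Set G // one ∈ I ∧ IsOpen I ∧ I.OrdConnected})
      ⟨f (U 0) (hU 0), hf1 _ _, hf3 _ _, hf4 _ _⟩
      (fun n p => ⟨f (p.1 ∩ U (n + 1))
        (Filter.inter_mem (p.2.2.1.mem_nhds p.2.1) (hU (n + 1))),
        hf1 _ _, hf3 _ _, hf4 _ _⟩) n
  set J : ℕ → Set G := fun n => (R n).1 with hJdef
  have hJone : ∀ n, one ∈ J n := fun n => (R n).2.1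
  have hJopen : ∀ n, IsOpen (J n) := fun n => (R n).2.2.1
  have hJconv : ∀ n, (J n).OrdConnected := fun n => (R n).2.2.2
  have hJmem : ∀ n, J n ∈ 𝓝 (one : G) := fun n => (hJopen n).mem_nhds (hJone n)
  have hJU : ∀ n, J n ⊆ U n := by
    intro n
    cases n with
    | zero => exact hf2 _ _
    | succ m => exact (hf2 _ _).trans Set.inter_subset_right
  have hJdec : ∀ n, J (n + 1) ⊆ J n := fun n => (hf2 _ _).trans Set.inter_subset_left
  have hJanti : Antitone J := antitone_nat_of_succ_le hJdec
  have hJT : (⋂ n, J n) ∉ 𝓝 (one : G) := fun h =>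
    hT (Filter.mem_of_superset h (Set.iInter_mono hJU))
  have hLbRb : (∃ w, w < one ∧ ∀ n, w ∈ J n) → (∃ y, one < y ∧ ∀ n, y ∈ J n) → False := by
    rintro ⟨w, hw, hwJ⟩ ⟨y, hy, hyJ⟩
    refine hJT (Filter.mem_of_superset (isOpen_Ioo.mem_nhds ⟨hw, hy⟩ :
        Set.Ioo w y ∈ 𝓝 (one : G)) (Set.subset_iInter fun n x hx => ?_))
    exact (hJconv n).out (hwJ n) (hyJ n) ⟨hx.1.le, hx.2.le⟩
  have hLbcR : (∃ w, w < one ∧ ∀ n, w ∈ J n) → Set.Iic (one : G) ∈ 𝓝 (one : G) → False := by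
    rintro ⟨w, hw, hwJ⟩ hcR
    refine hJT (Filter.mem_of_superset
      (Filter.inter_mem (isOpen_Ioi.mem_nhds hw : Set.Ioi w ∈ 𝓝 (one : G)) hcR)
      (Set.subset_iInter fun n x hx => ?_))
    exact (hJconv n).out (hwJ n) (hJone n) ⟨hx.1.le, hx.2⟩
  have hRbcL : (∃ y, one < y ∧ ∀ n, y ∈ J n) → Set.Ici (one : G) ∈ 𝓝 (one : G) → False := by
    rintro ⟨y, hy, hyJ⟩ hcL
    refine hJT (Filter.mem_of_superset
      (Filter.inter_mem (isOpen_Iio.mem_nhds hy : Set.Iio y ∈ 𝓝 (one : G)) hcL)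
      (Set.subset_iInter fun n x hx => ?_))
    exact (hJconv n).out (hJone n) (hyJ n) ⟨hx.2, hx.1.le⟩
  have hcLcR : Set.Ici (one : G) ∈ 𝓝 (one : G) → Set.Iic (one : G) ∈ 𝓝 (one : G) → False := by
    intro hcL hcR
    refine hJT (Filter.mem_of_superset (Filter.inter_mem hcL hcR)
      (fun x hx => ?_))
    have : x = one := le_antisymm hx.2 hx.1
    subst this
    exact Set.mem_iInter.2 hJone
  by_cases hLb : ∃ w, w < one ∧ ∀ n, w ∈ J n
  · by_cases hRb : ∃ y, one < y ∧ ∀ n, y ∈ J n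
    · exact (hLbRb hLb hRb).elim
    · -- Case B
      have hRb' : ∀ y, one < y → ∃ n, y ∉ J n := by push_neg at hRb; exact hRb
      have hcR : Set.Iic (one : G) ∉ 𝓝 (one : G) := fun h => hLbcR hLb h
      have hRshrink : ∀ y, one < y → ∃ n, ∀ x ∈ J n, one ≤ x → x < y := by
        intro y hy
        obtain ⟨n, hn⟩ := hRb' y hy
        refine ⟨n, fun x hx h1x => ?_⟩
        by_contra hge
        push_neg at hge
        exact hn ((hJconv n).out (hJone n) hx ⟨hy.le, hge⟩)
      by_cases hcL : Set.Ici (one : G) ∈ 𝓝 (one : G)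
      · refine cg_of_base (fun n => J n ∩ Set.Ici one)
          (fun n => Filter.inter_mem (hJmem n) hcL) (fun W hW => ?_)
        obtain ⟨I, hIone, hIW, hIo, hIc⟩ := exists_convex_open (one : G) hW
        by_cases hv : ∃ v ∈ I, one < v
        · obtain ⟨v, hvI, hv1⟩ := hv
          obtain ⟨n, hn⟩ := hRshrink v hv1
          exact ⟨n, fun x hx => hIW (hIc.out hIone hvI ⟨hx.2, (hn x hx.1 hx.2).le⟩)⟩
        · push_neg at hv
          exact absurd (Filter.mem_of_superset (hIo.mem_nhds hIone)
            fun x hx => hv x hx) hcR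
      · by_cases hLS : ∃ g : ℕ → G, (∀ k, g k < one) ∧ ∀ z, z < one → ∃ k, z ≤ g k
        · obtain ⟨g, hg1, hg2⟩ := hLS
          refine cg_of_base (ι := ℕ × ℕ) (fun p => Set.Ioi (g p.1) ∩ J p.2)
            (fun p => Filter.inter_mem (isOpen_Ioi.mem_nhds (hg1 p.1)) (hJmem p.2))
            (fun W hW => ?_)
          obtain ⟨I, hIone, hIW, hIo, hIc⟩ := exists_convex_open (one : G) hW
          obtain ⟨u, huI, hu1⟩ := nhds_lt_of_not_Ici hcL (hIo.mem_nhds hIone)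
          obtain ⟨k, hk⟩ := hg2 u hu1
          by_cases hv : ∃ v ∈ I, one < v
          · obtain ⟨v, hvI, hv1⟩ := hv
            obtain ⟨n, hn⟩ := hRshrink v hv1
            refine ⟨(k, n), fun x hx => ?_⟩
            rcases le_total x one with hx1 | hx1
            · exact hIW (hIc.out huI hIone ⟨hk.trans hx.1.le, hx1⟩)
            · exact hIW (hIc.out hIone hvI ⟨hx1, (hn x hx.2 hx1).le⟩)
          · push_neg at hv
            exact absurd (Filter.mem_of_superset (hIo.mem_nhds hIone)
              fun x hx => hv x hx) hcR
        · exfalso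
          obtain ⟨V, hVg, hVsub, hVdec, hVprod⟩ := seq_shrink hS J hJmem
          have hCn := fun n => exists_convex_open (one : G) ((hVg n).1)
          choose C hC1 hC2 hC3 hC4 using hCn
          have hun : ∀ n, ∃ u ∈ C n, u < one := fun n =>
            nhds_lt_of_not_Ici hcL ((hC3 n).mem_nhds (hC1 n))
          choose uu huuC huu1 using hun
          push_neg at hLS
          obtain ⟨z, hz1, hz2⟩ := hLS uu huu1
          set S := ⋂ n, V n with hSdef
          have hSop : ∀ a ∈ S, ∀ b ∈ S, op a b ∈ S := fun a ha b hb =>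
            Set.mem_iInter.2 fun n => hVprod n a (Set.mem_iInter.1 ha (n + 1))
              b (Set.mem_iInter.1 hb (n + 1))
          have hSinv : ∀ a ∈ S, inv a ∈ S := fun a ha =>
            Set.mem_iInter.2 fun n => (hVg n).2.1 a (Set.mem_iInter.1 ha n)
          have hSsub : S ⊆ Set.Iic one := by
            intro s hs
            by_contra hgt
            rw [Set.mem_Iic, not_le] at hgt
            exact hRb ⟨s, hgt, fun n => hVsub n (Set.mem_iInter.1 hs n)⟩
          have hIoo : Set.Ioo z one ⊆ S := by
            intro x hx
            refine Set.mem_iInter.2 fun n => hC2 n ?_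
            exact (hC4 n).out (huuC n) (hC1 n) ⟨((hz2 n).trans hx.1).le, hx.2.le⟩
          have hne : (Set.Ioo z one).Nonempty := by
            obtain ⟨x, hxW, hx1⟩ := nhds_lt_of_not_Ici hcL
              (isOpen_Ioi.mem_nhds hz1 : Set.Ioi z ∈ 𝓝 (one : G))
            exact ⟨x, hxW, hx1⟩
          exact subgroup_in_halfspace hS.1.1 hSop hSinv hSsub hcR isOpen_Ioo hne hIoo
  · by_cases hRb : ∃ y, one < y ∧ ∀ n, y ∈ J n
    · -- Case C (mirror of B)
      have hLb' : ∀ w, w < one → ∃ n, w ∉ J n := by push_neg at hLb; exact hLb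
      have hcL : Set.Ici (one : G) ∉ 𝓝 (one : G) := fun h => hRbcL hRb h
      have hLshrink : ∀ u, u < one → ∃ n, ∀ x ∈ J n, x ≤ one → u < x := by
        intro u hu
        obtain ⟨n, hn⟩ := hLb' u hu
        refine ⟨n, fun x hx hx1 => ?_⟩
        by_contra hge
        push_neg at hge
        exact hn ((hJconv n).out hx (hJone n) ⟨hge, hu.le⟩)
      by_cases hcR : Set.Iic (one : G) ∈ 𝓝 (one : G)
      · refine cg_of_base (fun n => J n ∩ Set.Iic one)
          (fun n => Filter.inter_mem (hJmem n) hcR) (fun W hW => ?_)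
        obtain ⟨I, hIone, hIW, hIo, hIc⟩ := exists_convex_open (one : G) hW
        by_cases hu : ∃ u ∈ I, u < one
        · obtain ⟨u, huI, hu1⟩ := hu
          obtain ⟨n, hn⟩ := hLshrink u hu1
          exact ⟨n, fun x hx => hIW (hIc.out huI hIone ⟨(hn x hx.1 hx.2).le, hx.2⟩)⟩
        · push_neg at hu
          exact absurd (Filter.mem_of_superset (hIo.mem_nhds hIone)
            fun x hx => hu x hx) hcL
      · by_cases hRS : ∃ g : ℕ → G, (∀ k, one < g k) ∧ ∀ z, one < z → ∃ k, g k ≤ z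
        · obtain ⟨g, hg1, hg2⟩ := hRS
          refine cg_of_base (ι := ℕ × ℕ) (fun p => Set.Iio (g p.1) ∩ J p.2)
            (fun p => Filter.inter_mem (isOpen_Iio.mem_nhds (hg1 p.1)) (hJmem p.2))
            (fun W hW => ?_)
          obtain ⟨I, hIone, hIW, hIo, hIc⟩ := exists_convex_open (one : G) hW
          obtain ⟨v, hvI, hv1⟩ := nhds_gt_of_not_Iic hcR (hIo.mem_nhds hIone)
          obtain ⟨k, hk⟩ := hg2 v hv1
          by_cases hu : ∃ u ∈ I, u < one
          · obtain ⟨u, huI, hu1⟩ := hu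
            obtain ⟨n, hn⟩ := hLshrink u hu1
            refine ⟨(k, n), fun x hx => ?_⟩
            rcases le_total x one with hx1 | hx1
            · exact hIW (hIc.out huI hIone ⟨(hn x hx.2 hx1).le, hx1⟩)
            · exact hIW (hIc.out hIone hvI ⟨hx1, hx.1.le.trans hk⟩)
          · push_neg at hu
            exact absurd (Filter.mem_of_superset (hIo.mem_nhds hIone)
              fun x hx => hu x hx) hcL
        · exfalso
          obtain ⟨V, hVg, hVsub, hVdec, hVprod⟩ := seq_shrink hS J hJmem
          have hCn := fun n => exists_convex_open (one : G) ((hVg n).1)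
          choose C hC1 hC2 hC3 hC4 using hCn
          have hvn : ∀ n, ∃ v ∈ C n, one < v := fun n =>
            nhds_gt_of_not_Iic hcR ((hC3 n).mem_nhds (hC1 n))
          choose vv hvvC hvv1 using hvn
          push_neg at hRS
          obtain ⟨z, hz1, hz2⟩ := hRS vv hvv1
          set S := ⋂ n, V n with hSdef
          have hSop : ∀ a ∈ S, ∀ b ∈ S, op a b ∈ S := fun a ha b hb =>
            Set.mem_iInter.2 fun n => hVprod n a (Set.mem_iInter.1 ha (n + 1))
              b (Set.mem_iInter.1 hb (n + 1))
          have hSinv : ∀ a ∈ S, inv a ∈ S := fun a ha =>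
            Set.mem_iInter.2 fun n => (hVg n).2.1 a (Set.mem_iInter.1 ha n)
          have hSsub : S ⊆ Set.Ici one := by
            intro s hs
            by_contra hgt
            rw [Set.mem_Ici, not_le] at hgt
            exact hLb ⟨s, hgt, fun n => hVsub n (Set.mem_iInter.1 hs n)⟩
          have hIoo : Set.Ioo one z ⊆ S := by
            intro x hx
            refine Set.mem_iInter.2 fun n => hC2 n ?_
            exact (hC4 n).out (hC1 n) (hvvC n) ⟨hx.1.le, (hx.2.trans (hz2 n)).le⟩
          have hne : (Set.Ioo one z).Nonempty := by
            obtain ⟨x, hxW, hx1⟩ := nhds_gt_of_not_Iic hcR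
              (isOpen_Iio.mem_nhds hz1 : Set.Iio z ∈ 𝓝 (one : G))
            exact ⟨x, hx1, hxW⟩
          exact subgroup_in_halfspace hS.1.1 hSop hSinv hSsub hcL isOpen_Ioo hne hIoo
    · -- Case A
      have hLb' : ∀ w, w < one → ∃ n, w ∉ J n := by push_neg at hLb; exact hLb
      have hRb' : ∀ y, one < y → ∃ n, y ∉ J n := by push_neg at hRb; exact hRb
      have hLshrink : ∀ u, u < one → ∃ n, ∀ x ∈ J n, x ≤ one → u < x := by
        intro u hu
        obtain ⟨n, hn⟩ := hLb' u hu
        refine ⟨n, fun x hx hx1 => ?_⟩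
        by_contra hge
        push_neg at hge
        exact hn ((hJconv n).out hx (hJone n) ⟨hge, hu.le⟩)
      have hRshrink : ∀ y, one < y → ∃ n, ∀ x ∈ J n, one ≤ x → x < y := by
        intro y hy
        obtain ⟨n, hn⟩ := hRb' y hy
        refine ⟨n, fun x hx h1x => ?_⟩
        by_contra hge
        push_neg at hge
        exact hn ((hJconv n).out (hJone n) hx ⟨hy.le, hge⟩)
      by_cases hcL : Set.Ici (one : G) ∈ 𝓝 (one : G)
      · by_cases hcR : Set.Iic (one : G) ∈ 𝓝 (one : G)
        · exact (hcLcR hcL hcR).elim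
        · refine cg_of_base (fun n => J n ∩ Set.Ici one)
            (fun n => Filter.inter_mem (hJmem n) hcL) (fun W hW => ?_)
          obtain ⟨I, hIone, hIW, hIo, hIc⟩ := exists_convex_open (one : G) hW
          obtain ⟨v, hvI, hv1⟩ := nhds_gt_of_not_Iic hcR (hIo.mem_nhds hIone)
          obtain ⟨n, hn⟩ := hRshrink v hv1
          exact ⟨n, fun x hx => hIW (hIc.out hIone hvI ⟨hx.2, (hn x hx.1 hx.2).le⟩)⟩
      · by_cases hcR : Set.Iic (one : G) ∈ 𝓝 (one : G)
        · refine cg_of_base (fun n => J n ∩ Set.Iic one)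
            (fun n => Filter.inter_mem (hJmem n) hcR) (fun W hW => ?_)
          obtain ⟨I, hIone, hIW, hIo, hIc⟩ := exists_convex_open (one : G) hW
          obtain ⟨u, huI, hu1⟩ := nhds_lt_of_not_Ici hcL (hIo.mem_nhds hIone)
          obtain ⟨n, hn⟩ := hLshrink u hu1
          exact ⟨n, fun x hx => hIW (hIc.out huI hIone ⟨(hn x hx.1 hx.2).le, hx.2⟩)⟩
        · refine cg_of_base J hJmem (fun W hW => ?_)
          obtain ⟨I, hIone, hIW, hIo, hIc⟩ := exists_convex_open (one : G) hW
          obtain ⟨u, huI, hu1⟩ := nhds_lt_of_not_Ici hcL (hIo.mem_nhds hIone)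
          obtain ⟨v, hvI, hv1⟩ := nhds_gt_of_not_Iic hcR (hIo.mem_nhds hIone)
          obtain ⟨n₁, hn₁⟩ := hLshrink u hu1
          obtain ⟨n₂, hn₂⟩ := hRshrink v hv1
          refine ⟨max n₁ n₂, fun x hx => ?_⟩
          have hx1 : x ∈ J n₁ := hJanti (le_max_left _ _) hx
          have hx2 : x ∈ J n₂ := hJanti (le_max_right _ _) hx
          rcases le_total x one with hle | hle
          · exact hIW (hIc.out huI hIone ⟨(hn₁ x hx1 hle).le, hle⟩)
          · exact hIW (hIc.out hIone hvI ⟨hle, (hn₂ x hx2 hle).le⟩)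

end PPoint

section Metr

open Gyrogroup

variable {G : Type u} [Gyrogroup G] [TopologicalSpace G] [LinearOrder G] [OrderTopology G]

lemma metrizable_of_cg (hS : StronglyTopologicalGyrogroup G)
    (hCG : (𝓝 (one : G)).IsCountablyGenerated) : TopologicalSpace.MetrizableSpace G := by
  have hc : Continuous fun p : G × G => op p.1 p.2 := hS.1.1
  obtain ⟨W, hW⟩ := (𝓝 (one : G)).exists_antitone_basis
  obtain ⟨V, hVg, hVsub, hVdec, hVprod⟩ := seq_shrink hS W fun n => hW.mem n
  have hVanti : Antitone V := antitone_nat_of_succ_le hVdec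
  have hVbasis : ∀ {t : Set G}, t ∈ 𝓝 (one : G) ↔ ∃ n, V n ⊆ t := by
    intro t
    constructor
    · intro ht
      obtain ⟨i, -, hi⟩ := hW.1.mem_iff.1 ht
      exact ⟨i, (hVsub i).trans hi⟩
    · rintro ⟨n, hn⟩
      exact Filter.mem_of_superset (hVg n).1 hn
  set E : ℕ → Set (G × G) := fun n => {p : G × G | op (inv p.1) p.2 ∈ V n} with hEdef
  have hEdir : Directed (· ≥ ·) E := by
    intro m n
    exact ⟨max m n, fun p hp => hVanti (le_max_left m n) hp,
      fun p hp => hVanti (le_max_right m n) hp⟩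
  set UU : Filter (G × G) := ⨅ n, Filter.principal (E n) with hUUdef
  have hB : UU.HasBasis (fun _ : ℕ => True) E := Filter.hasBasis_iInf_principal hEdir
  have hone_mem : ∀ n, (one : G) ∈ V n := fun n => mem_of_mem_nhds (hVg n).1
  let core : UniformSpace.Core G :=
    { uniformity := UU
      refl := le_iInf fun n => by
        refine Filter.principal_mono.2 ?_
        rintro ⟨x, y⟩ h
        have hxy : x = y := h
        subst hxy
        show op (inv x) x ∈ V n
        rw [inv_op]
        exact hone_mem n
      symm := by
        refine (hB.tendsto_iff hB).2 fun n _ => ⟨n, trivial, ?_⟩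
        rintro ⟨x, y⟩ hp
        show op (inv y) x ∈ V n
        have h1 : inv (op (inv x) y) ∈ V n := (hVg n).2.1 _ hp
        have h2 : gyr (inv x) y (op (inv y) x) ∈ V n := by
          rw [symm_identity]; exact h1
        exact mem_of_gyr_mem (hVg n).2.2 h2
      comp := le_iInf fun n => by
        rw [Filter.le_principal_iff]
        refine Filter.mem_of_superset
          (Filter.mem_lift' (hB.mem_of_mem (i := n + 1) trivial)) ?_
        rintro ⟨x, z⟩ ⟨y, hxy, hyz⟩
        show op (inv x) z ∈ V n
        have h2 : gyr (inv x) y (op (inv y) z) ∈ V (n + 1) := by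
          have himg := (hVg (n + 1)).2.2 (inv x) y
          exact himg ▸ ⟨_, hyz, rfl⟩
        have h3 := hVprod n _ hxy _ h2
        rwa [comp_identity] at h3 }
  have h_eq : (inferInstance : TopologicalSpace G) = core.toTopologicalSpace := by
    refine TopologicalSpace.ext_nhds fun x => ?_
    rw [core.nhds_toTopologicalSpace]
    have hx : 𝓝 x = Filter.map (fun y => op x y) (𝓝 (one : G)) := by
      have h := (homeoL hc x).map_nhds_eq (one : G)
      rw [show (homeoL hc x) (one : G) = x from op_one x] at h
      exact h.symm
    rw [hx]
    refine Filter.ext fun s => ?_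
    rw [Filter.mem_map, Filter.mem_comap]
    constructor
    · intro hs
      obtain ⟨n, hn⟩ := hVbasis.1 hs
      refine ⟨E n, hB.mem_of_mem trivial, ?_⟩
      intro y hy
      have h1 : op (inv x) y ∈ V n := hy
      have h2 : op x (op (inv x) y) ∈ s := hn h1
      have h3 : op x (op (inv x) y) = y := left_cancel' x y
      rwa [h3] at h2
    · rintro ⟨t, ht, hts⟩
      obtain ⟨n, -, hEt⟩ := hB.mem_iff.1 ht
      refine Filter.mem_of_superset (hVg n).1 fun v hv => ?_
      apply hts
      refine hEt ?_
      show op (inv x) (op x v) ∈ V n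
      rwa [left_cancel]
  letI us : UniformSpace G := UniformSpace.ofCoreEq core _ h_eq
  haveI hcg : Filter.IsCountablyGenerated (uniformity G) := hB.isCountablyGenerated
  haveI ht0 : T0Space G := inferInstance
  exact UniformSpace.metrizableSpace

end Metr

section Chain

open Gyrogroup

variable {G : Type u} [Gyrogroup G] [TopologicalSpace G] [LinearOrder G] [OrderTopology G]

lemma chain_base (hS : StronglyTopologicalGyrogroup G)
    (hCG : ¬(𝓝 (one : G)).IsCountablyGenerated) :
    ∃ ℋ : Set (Set G), (∀ H ∈ ℋ, H ∈ nhds (one : G)) ∧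
      (∀ V ∈ nhds (one : G), ∃ H ∈ ℋ, H ⊆ V) ∧
      (∀ H ∈ ℋ, ∀ K ∈ ℋ, H ⊆ K ∨ K ⊆ H) ∧
      (∀ H ∈ ℋ, IsClopen H ∧ IsLSubgyrogroup H ∧ ∀ x y : G, (gyr x y) '' H = H) := by
  have Pp : ∀ W : ℕ → Set G, (∀ n, W n ∈ 𝓝 (one : G)) → (⋂ n, W n) ∈ 𝓝 (one : G) :=
    fun W hW => (ppoint hS W hW).resolve_left hCG
  set Λ : Set G := {x | (Set.Ici (one : G) ∈ 𝓝 (one : G) → one ≤ x) ∧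
    (Set.Iic (one : G) ∈ 𝓝 (one : G) → x ≤ one)} with hΛdef
  have hΛmem : Λ ∈ 𝓝 (one : G) := by
    by_cases hcL : Set.Ici (one : G) ∈ 𝓝 (one : G) <;>
      by_cases hcR : Set.Iic (one : G) ∈ 𝓝 (one : G)
    · exact Filter.mem_of_superset (Filter.inter_mem hcL hcR)
        fun x hx => ⟨fun _ => hx.1, fun _ => hx.2⟩
    · exact Filter.mem_of_superset hcL fun x hx => ⟨fun _ => hx, fun h => absurd h hcR⟩
    · exact Filter.mem_of_superset hcR fun x hx => ⟨fun h => absurd h hcL, fun _ => hx⟩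
    · exact Filter.mem_of_superset Filter.univ_mem
        fun x _ => ⟨fun h => absurd h hcL, fun h => absurd h hcR⟩
  have hΛconv : Λ.OrdConnected := by
    constructor
    rintro x hx y hy z hz
    exact ⟨fun h => (hx.1 h).trans hz.1, fun h => hz.2.trans (hy.2 h)⟩
  set CC : Set G → Set G :=
    fun K => {x | ∃ I : Set G, I.OrdConnected ∧ one ∈ I ∧ x ∈ I ∧ I ⊆ K} with hCCdef
  have hCCsub : ∀ K, CC K ⊆ K := by
    rintro K x ⟨I, -, -, hxI, hIK⟩
    exact hIK hxI
  have hCCone : ∀ K : Set G, one ∈ K → one ∈ CC K := by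
    intro K hK
    refine ⟨Set.Icc one one, Set.ordConnected_Icc, ⟨le_refl _, le_refl _⟩,
      ⟨le_refl _, le_refl _⟩, ?_⟩
    rintro x ⟨h1, h2⟩
    rwa [le_antisymm h2 h1]
  have hCCmono : ∀ {K K' : Set G}, K ⊆ K' → CC K ⊆ CC K' := by
    rintro K K' h x ⟨I, c, o, m, sub⟩
    exact ⟨I, c, o, m, sub.trans h⟩
  have hCCconv : ∀ K, (CC K).OrdConnected := by
    intro K
    constructor
    rintro x ⟨I₁, c₁, o₁, m₁, s₁⟩ y ⟨I₂, c₂, o₂, m₂, s₂⟩ z hz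
    refine ⟨I₁ ∪ I₂, ordConnected_union_of_common c₁ c₂ o₁ o₂, Or.inl o₁, ?_,
      Set.union_subset s₁ s₂⟩
    rcases le_total z one with hzle | hzge
    · exact Or.inl (c₁.out m₁ o₁ ⟨hz.1, hzle⟩)
    · exact Or.inr (c₂.out o₂ m₂ ⟨hzge, hz.2⟩)
  have hCCopen : ∀ K : Set G, IsOpen K → IsOpen (CC K) := by
    intro K hK
    rw [isOpen_iff_mem_nhds]
    rintro x ⟨I, cI, oI, mI, sI⟩
    obtain ⟨J, hJx, hJK, hJo, hJc⟩ := exists_convex_open x (hK.mem_nhds (sI mI))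
    refine Filter.mem_of_superset (hJo.mem_nhds hJx) fun z hz => ?_
    exact ⟨I ∪ J, ordConnected_union_of_common cI hJc mI hJx, Or.inl oI, Or.inr hz,
      Set.union_subset sI hJK⟩
  have hCCnbhd : ∀ K : Set G, K ∈ 𝓝 (one : G) → CC K ∈ 𝓝 (one : G) := by
    intro K hK
    obtain ⟨J, hJone, hJK, hJo, hJc⟩ := exists_convex_open (one : G) hK
    exact Filter.mem_of_superset (hJo.mem_nhds hJone) fun z hz => ⟨J, hJc, hJone, hz, hJK⟩
  set good : Set G → Prop := fun H => H ∈ 𝓝 (one : G) ∧ IsClopen H ∧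
    (∀ a ∈ H, ∀ b ∈ H, op a b ∈ H) ∧ (∀ a ∈ H, inv a ∈ H) ∧
    (∀ x y : G, (gyr x y) '' H = H) ∧ H ⊆ Λ with hgooddef
  set F : Set (Set (Set G)) := {ℋ | (∀ H ∈ ℋ, good H) ∧
    (∀ H ∈ ℋ, ∀ K ∈ ℋ, H ⊆ K ∨ K ⊆ H) ∧
    ∀ H ∈ ℋ, ∀ K ∈ ℋ, H ⊂ K → H ⊆ CC K} with hFdef
  obtain ⟨M, hMmax⟩ := zorn_subset F (by
    intro c hcF hchain
    refine ⟨⋃₀ c, ⟨?_, ?_, ?_⟩, fun s hs => Set.subset_sUnion_of_mem hs⟩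
    · rintro H ⟨ℋ, hℋc, hHℋ⟩
      exact (hcF hℋc).1 H hHℋ
    · rintro H ⟨ℋ₁, h1c, hH1⟩ K ⟨ℋ₂, h2c, hK2⟩
      rcases eq_or_ne ℋ₁ ℋ₂ with rfl | hne
      · exact (hcF h1c).2.1 H hH1 K hK2
      · rcases hchain h1c h2c hne with hsub | hsub
        · exact (hcF h2c).2.1 H (hsub hH1) K hK2
        · exact (hcF h1c).2.1 H hH1 K (hsub hK2)
    · rintro H ⟨ℋ₁, h1c, hH1⟩ K ⟨ℋ₂, h2c, hK2⟩ hlt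
      rcases eq_or_ne ℋ₁ ℋ₂ with rfl | hne
      · exact (hcF h1c).2.2 H hH1 K hK2 hlt
      · rcases hchain h1c h2c hne with hsub | hsub
        · exact (hcF h2c).2.2 H (hsub hH1) K hK2 hlt
        · exact (hcF h1c).2.2 H hH1 K (hsub hK2) hlt)
  have hMF : M ∈ F := hMmax.1
  have hext : ∀ K : Set G, good K → (∀ H ∈ M, K ⊆ CC H) → (∀ H ∈ M, ¬H ⊂ K) → K ∈ M := by
    intro K hKg hKCC hKnlt
    have hins : insert K M ∈ F := by
      refine ⟨?_, ?_, ?_⟩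
      · rintro H (rfl | hH)
        · exact hKg
        · exact hMF.1 H hH
      · rintro H (rfl | hH) K' (rfl | hK')
        · exact Or.inl subset_rfl
        · exact Or.inl ((hKCC K' hK').trans (hCCsub K'))
        · exact Or.inr ((hKCC H hH).trans (hCCsub H))
        · exact hMF.2.1 H hH K' hK'
      · rintro H (rfl | hH) K' (rfl | hK') hlt
        · exact absurd hlt (ssubset_irrefl _)
        · exact hKCC K' hK'
        · exact absurd hlt (hKnlt H hH)
        · exact hMF.2.2 H hH K' hK' hlt
    exact hMmax.2 hins (Set.subset_insert K M) (Set.mem_insert K M)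
  have hbase : ∀ Vv ∈ 𝓝 (one : G), ∃ H ∈ M, H ⊆ Vv := by
    intro Vv hVv
    by_contra hno
    push_neg at hno
    have KG := fun {U : Set G} (hU : U ∈ 𝓝 (one : G)) => exists_clopen_sub hS Pp hU
    by_cases hne : M.Nonempty
    · by_cases hmin : ∃ H₀ ∈ M, ∀ H ∈ M, H₀ ⊆ H
      · obtain ⟨H₀, hH₀M, hH₀min⟩ := hmin
        obtain ⟨K, hK1, hK2, hK3, hK4, hK5, hK6⟩ :=
          KG (Filter.inter_mem (hCCnbhd _ (hMF.1 _ hH₀M).1) (Filter.inter_mem hVv hΛmem))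
        have hKΛ : K ⊆ Λ := hK2.trans (Set.inter_subset_right.trans Set.inter_subset_right)
        have hKV : K ⊆ Vv := hK2.trans (Set.inter_subset_right.trans Set.inter_subset_left)
        have hKM : K ∈ M := hext K ⟨hK1, hK3, hK4, hK5, hK6, hKΛ⟩
          (fun H hH => (hK2.trans Set.inter_subset_left).trans (hCCmono (hH₀min H hH)))
          (fun H hH hlt => hno H hH (hlt.subset.trans hKV))
        exact hno K hKM hKV
      · push_neg at hmin
        have hstrict : ∀ H ∈ M, ∃ H' ∈ M, H' ⊂ H := by
          intro H hH
          obtain ⟨H₁, hH₁M, hns⟩ := hmin H hH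
          rcases hMF.2.1 H hH H₁ hH₁M with hsub | hsub
          · exact absurd hsub hns
          · exact ⟨H₁, hH₁M, hsub, fun hcon => hns hcon⟩
        have honeH : ∀ H ∈ M, (one : G) ∈ H := fun H hH => mem_of_mem_nhds (hMF.1 H hH).1
        have hinCC : ∀ s, s ∈ ⋂₀ M → ∀ H ∈ M, s ∈ CC H := by
          intro s hs H hH
          obtain ⟨H', hH'M, hlt⟩ := hstrict H hH
          exact hMF.2.2 H' hH'M H hH hlt (Set.mem_sInter.1 hs H' hH'M)
        by_cases hLb : ∃ w, w < one ∧ ∀ H ∈ M, w ∈ CC H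
        · obtain ⟨w, hw, hwC⟩ := hLb
          by_cases hRb : ∃ y, one < y ∧ ∀ H ∈ M, y ∈ CC H
          · obtain ⟨y, hy, hyC⟩ := hRb
            obtain ⟨K, hK1, hK2, hK3, hK4, hK5, hK6⟩ :=
              KG (Filter.inter_mem (isOpen_Ioo.mem_nhds ⟨hw, hy⟩ :
                Set.Ioo w y ∈ 𝓝 (one : G)) (Filter.inter_mem hVv hΛmem))
            have hKΛ : K ⊆ Λ := hK2.trans (Set.inter_subset_right.trans Set.inter_subset_right)
            have hKV : K ⊆ Vv := hK2.trans (Set.inter_subset_right.trans Set.inter_subset_left)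
            have hKM : K ∈ M := hext K ⟨hK1, hK3, hK4, hK5, hK6, hKΛ⟩
              (fun H hH x hx => (hCCconv H).out (hwC H hH) (hyC H hH)
                ⟨((hK2.trans Set.inter_subset_left) hx).1.le,
                 ((hK2.trans Set.inter_subset_left) hx).2.le⟩)
              (fun H hH hlt => hno H hH (hlt.subset.trans hKV))
            exact hno K hKM hKV
          · by_cases hcR : Set.Iic (one : G) ∈ 𝓝 (one : G)
            · obtain ⟨K, hK1, hK2, hK3, hK4, hK5, hK6⟩ :=
                KG (Filter.inter_mem (Filter.inter_mem
                  (isOpen_Ioi.mem_nhds hw : Set.Ioi w ∈ 𝓝 (one : G)) hcR)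
                  (Filter.inter_mem hVv hΛmem))
              have hKΛ : K ⊆ Λ := hK2.trans (Set.inter_subset_right.trans Set.inter_subset_right)
              have hKV : K ⊆ Vv := hK2.trans (Set.inter_subset_right.trans Set.inter_subset_left)
              have hKM : K ∈ M := hext K ⟨hK1, hK3, hK4, hK5, hK6, hKΛ⟩
                (fun H hH x hx => (hCCconv H).out (hwC H hH) (hCCone H (honeH H hH))
                  ⟨((hK2.trans Set.inter_subset_left) hx).1.le,
                   ((hK2.trans Set.inter_subset_left) hx).2⟩)
                (fun H hH hlt => hno H hH (hlt.subset.trans hKV))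
              exact hno K hKM hKV
            · have hcL : Set.Ici (one : G) ∉ 𝓝 (one : G) := by
                intro hcl
                obtain ⟨H, hHM⟩ := hne
                have hwΛ : w ∈ Λ :=
                  (hMF.1 H hHM).2.2.2.2.2 ((hCCsub H) (hwC H hHM))
                exact absurd (hwΛ.1 hcl) (not_le.2 hw)
              have hSop : ∀ a ∈ ⋂₀ M, ∀ b ∈ ⋂₀ M, op a b ∈ ⋂₀ M := by
                intro a ha b hb
                exact Set.mem_sInter.2 fun H hH => (hMF.1 H hH).2.2.1 a
                  (Set.mem_sInter.1 ha H hH) b (Set.mem_sInter.1 hb H hH)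
              have hSinv : ∀ a ∈ ⋂₀ M, inv a ∈ ⋂₀ M := by
                intro a ha
                exact Set.mem_sInter.2 fun H hH => (hMF.1 H hH).2.2.2.1 a
                  (Set.mem_sInter.1 ha H hH)
              have hSsub : ⋂₀ M ⊆ Set.Iic (one : G) := by
                intro s hs
                by_contra hgt
                rw [Set.mem_Iic, not_le] at hgt
                exact hRb ⟨s, hgt, fun H hH => hinCC s hs H hH⟩
              have hIoo : Set.Ioo w one ⊆ ⋂₀ M := by
                intro x hx
                exact Set.mem_sInter.2 fun H hH => (hCCsub H)
                  ((hCCconv H).out (hwC H hH) (hCCone H (honeH H hH)) ⟨hx.1.le, hx.2.le⟩)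
              have hne' : (Set.Ioo w one).Nonempty := by
                obtain ⟨x, hxW, hx1⟩ := nhds_lt_of_not_Ici hcL
                  (isOpen_Ioi.mem_nhds hw : Set.Ioi w ∈ 𝓝 (one : G))
                exact ⟨x, hxW, hx1⟩
              exact (subgroup_in_halfspace hS.1.1 hSop hSinv hSsub hcR isOpen_Ioo
                hne' hIoo).elim
        · by_cases hRb : ∃ y, one < y ∧ ∀ H ∈ M, y ∈ CC H
          · obtain ⟨y, hy, hyC⟩ := hRb
            by_cases hcL : Set.Ici (one : G) ∈ 𝓝 (one : G)
            · obtain ⟨K, hK1, hK2, hK3, hK4, hK5, hK6⟩ :=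
                KG (Filter.inter_mem (Filter.inter_mem hcL
                  (isOpen_Iio.mem_nhds hy : Set.Iio y ∈ 𝓝 (one : G)))
                  (Filter.inter_mem hVv hΛmem))
              have hKΛ : K ⊆ Λ := hK2.trans (Set.inter_subset_right.trans Set.inter_subset_right)
              have hKV : K ⊆ Vv := hK2.trans (Set.inter_subset_right.trans Set.inter_subset_left)
              have hKM : K ∈ M := hext K ⟨hK1, hK3, hK4, hK5, hK6, hKΛ⟩
                (fun H hH x hx => (hCCconv H).out (hCCone H (honeH H hH)) (hyC H hH)
                  ⟨((hK2.trans Set.inter_subset_left) hx).1,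
                   ((hK2.trans Set.inter_subset_left) hx).2.le⟩)
                (fun H hH hlt => hno H hH (hlt.subset.trans hKV))
              exact hno K hKM hKV
            · have hcR : Set.Iic (one : G) ∉ 𝓝 (one : G) := by
                intro hcr
                obtain ⟨H, hHM⟩ := hne
                have hyΛ : y ∈ Λ :=
                  (hMF.1 H hHM).2.2.2.2.2 ((hCCsub H) (hyC H hHM))
                exact absurd (hyΛ.2 hcr) (not_le.2 hy)
              have hSop : ∀ a ∈ ⋂₀ M, ∀ b ∈ ⋂₀ M, op a b ∈ ⋂₀ M := by
                intro a ha b hb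
                exact Set.mem_sInter.2 fun H hH => (hMF.1 H hH).2.2.1 a
                  (Set.mem_sInter.1 ha H hH) b (Set.mem_sInter.1 hb H hH)
              have hSinv : ∀ a ∈ ⋂₀ M, inv a ∈ ⋂₀ M := by
                intro a ha
                exact Set.mem_sInter.2 fun H hH => (hMF.1 H hH).2.2.2.1 a
                  (Set.mem_sInter.1 ha H hH)
              have hSsub : ⋂₀ M ⊆ Set.Ici (one : G) := by
                intro s hs
                by_contra hgt
                rw [Set.mem_Ici, not_le] at hgt
                exact hLb ⟨s, hgt, fun H hH => hinCC s hs H hH⟩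
              have hIoo : Set.Ioo one y ⊆ ⋂₀ M := by
                intro x hx
                exact Set.mem_sInter.2 fun H hH => (hCCsub H)
                  ((hCCconv H).out (hCCone H (honeH H hH)) (hyC H hH) ⟨hx.1.le, hx.2.le⟩)
              have hne' : (Set.Ioo one y).Nonempty := by
                obtain ⟨x, hxW, hx1⟩ := nhds_gt_of_not_Iic hcR
                  (isOpen_Iio.mem_nhds hy : Set.Iio y ∈ 𝓝 (one : G))
                exact ⟨x, hx1, hxW⟩
              exact (subgroup_in_halfspace hS.1.1 hSop hSinv hSsub hcL isOpen_Ioo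
                hne' hIoo).elim
          · push_neg at hLb hRb
            obtain ⟨I, hIone, hIV, hIo, hIc⟩ := exists_convex_open (one : G) hVv
            by_cases hu : ∃ u ∈ I, u < one
            · obtain ⟨u, huI, hu1⟩ := hu
              obtain ⟨H₁, hH₁M, hH₁⟩ := hLb u hu1
              by_cases hv : ∃ v ∈ I, one < v
              · obtain ⟨v, hvI, hv1⟩ := hv
                obtain ⟨H₂, hH₂M, hH₂⟩ := hRb v hv1
                have key : ∀ H₃ ∈ M, u ∉ CC H₃ → v ∉ CC H₃ → False := by
                  intro H₃ hH₃M hu3 hv3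
                  obtain ⟨H₄, hH₄M, hlt⟩ := hstrict H₃ hH₃M
                  have hH₄CC : H₄ ⊆ CC H₃ := hMF.2.2 H₄ hH₄M H₃ hH₃M hlt
                  refine hno H₄ hH₄M fun x hx => ?_
                  have hxCC : x ∈ CC H₃ := hH₄CC hx
                  rcases le_total x one with hle | hle
                  · by_cases hxu : x ≤ u
                    · exact absurd ((hCCconv H₃).out hxCC (hCCone H₃ (honeH H₃ hH₃M))
                        ⟨hxu, hu1.le⟩) hu3
                    · push_neg at hxu
                      exact hIV (hIc.out huI hIone ⟨hxu.le, hle⟩)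
                  · by_cases hxv : v ≤ x
                    · exact absurd ((hCCconv H₃).out (hCCone H₃ (honeH H₃ hH₃M)) hxCC
                        ⟨hv1.le, hxv⟩) hv3
                    · push_neg at hxv
                      exact hIV (hIc.out hIone hvI ⟨hle, hxv.le⟩)
                rcases hMF.2.1 H₁ hH₁M H₂ hH₂M with h12 | h21
                · exact key H₁ hH₁M hH₁ (fun hvmem => hH₂ (hCCmono h12 hvmem))
                · exact key H₂ hH₂M (fun humem => hH₁ (hCCmono h21 humem)) hH₂
              · push_neg at hv
                have hcR : Set.Iic (one : G) ∈ 𝓝 (one : G) :=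
                  Filter.mem_of_superset (hIo.mem_nhds hIone) fun x hx => hv x hx
                obtain ⟨H₄, hH₄M, hlt⟩ := hstrict H₁ hH₁M
                have hH₄CC : H₄ ⊆ CC H₁ := hMF.2.2 H₄ hH₄M H₁ hH₁M hlt
                refine hno H₄ hH₄M fun x hx => ?_
                have hxΛ : x ≤ one :=
                  ((hMF.1 H₄ hH₄M).2.2.2.2.2 hx).2 hcR
                by_cases hxu : x ≤ u
                · exact absurd ((hCCconv H₁).out (hH₄CC hx) (hCCone H₁ (honeH H₁ hH₁M))
                    ⟨hxu, hu1.le⟩) hH₁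
                · push_neg at hxu
                  exact hIV (hIc.out huI hIone ⟨hxu.le, hxΛ⟩)
            · push_neg at hu
              have hcL : Set.Ici (one : G) ∈ 𝓝 (one : G) :=
                Filter.mem_of_superset (hIo.mem_nhds hIone) fun x hx => hu x hx
              by_cases hv : ∃ v ∈ I, one < v
              · obtain ⟨v, hvI, hv1⟩ := hv
                obtain ⟨H₂, hH₂M, hH₂⟩ := hRb v hv1
                obtain ⟨H₄, hH₄M, hlt⟩ := hstrict H₂ hH₂M
                have hH₄CC : H₄ ⊆ CC H₂ := hMF.2.2 H₄ hH₄M H₂ hH₂M hlt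
                refine hno H₄ hH₄M fun x hx => ?_
                have hxΛ : one ≤ x :=
                  ((hMF.1 H₄ hH₄M).2.2.2.2.2 hx).1 hcL
                by_cases hxv : v ≤ x
                · exact absurd ((hCCconv H₂).out (hCCone H₂ (honeH H₂ hH₂M)) (hH₄CC hx)
                    ⟨hv1.le, hxv⟩) hH₂
                · push_neg at hxv
                  exact hIV (hIc.out hIone hvI ⟨hxΛ, hxv.le⟩)
              · push_neg at hv
                have hcR : Set.Iic (one : G) ∈ 𝓝 (one : G) :=
                  Filter.mem_of_superset (hIo.mem_nhds hIone) fun x hx => hv x hx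
                obtain ⟨H, hHM⟩ := hne
                refine hno H hHM fun x hx => ?_
                have hxΛ := (hMF.1 H hHM).2.2.2.2.2 hx
                have hxone : x = one := le_antisymm (hxΛ.2 hcR) (hxΛ.1 hcL)
                rw [hxone]
                exact hIV hIone
    · obtain ⟨K, hK1, hK2, hK3, hK4, hK5, hK6⟩ :=
        KG (Filter.inter_mem hVv hΛmem)
      have hKM : K ∈ M := hext K ⟨hK1, hK3, hK4, hK5, hK6,
          hK2.trans Set.inter_subset_right⟩
        (fun H hH => absurd ⟨H, hH⟩ hne) (fun H hH => absurd ⟨H, hH⟩ hne)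
      exact hno K hKM (hK2.trans Set.inter_subset_left)
  refine ⟨M, fun H hH => (hMF.1 H hH).1, hbase, fun H hH K hK => hMF.2.1 H hH K hK, ?_⟩
  intro H hH
  obtain ⟨hHn, hHcl, hHop, hHinv, hHgyr, -⟩ := hMF.1 H hH
  have honeH : (one : G) ∈ H := mem_of_mem_nhds hHn
  refine ⟨hHcl, ⟨⟨⟨one, honeH⟩, honeH, hHop, hHinv, ?_⟩, fun g hh hhH => hHgyr g hh⟩,
    hHgyr⟩
  intro a _ b _
  exact ⟨fun x hx => by rw [← hHgyr a b]; exact ⟨x, hx, rfl⟩,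
    (gyr a b).injective.injOn, fun x hx => by rw [← hHgyr a b] at hx; exact hx⟩

end Chain

open Gyrogroup
/-- A strongly topologically orderable gyrogroup is either metrizable or has a totally
ordered local base at the identity consisting of clopen gyr-invariant L-subgyrogroups. -/
theorem stmt9 {G : Type u} [Gyrogroup G] [TopologicalSpace G]
    (h : StronglyTopologicallyOrderable G) :
    TopologicalSpace.MetrizableSpace G ∨
    ∃ ℋ : Set (Set G), (∀ H ∈ ℋ, H ∈ nhds (one : G)) ∧
      (∀ V ∈ nhds (one : G), ∃ H ∈ ℋ, H ⊆ V) ∧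
      (∀ H ∈ ℋ, ∀ K ∈ ℋ, H ⊆ K ∨ K ⊆ H) ∧
      (∀ H ∈ ℋ, IsClopen H ∧ IsLSubgyrogroup H ∧ ∀ x y : G, (gyr x y) '' H = H) := by
  obtain ⟨hSt, l, hl⟩ := h
  letI := l
  haveI : OrderTopology G := ⟨hl⟩
  by_cases hCG : (𝓝 (one : G)).IsCountablyGenerated
  · exact Or.inl (metrizable_of_cg hSt hCG)
  · exact Or.inr (chain_base hSt hCG)
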